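/- Define the Concentratable Entanglement of an n-qubit pure state |ψ⟩ as C(|ψ⟩) = 1 − (1/2ⁿ) Σ_{α ⊆ {1,…,n}} Tr(ρ_α²), where ρ_α is the reduced state on the qubits in α (with the convention Tr(ρ_∅²) = 1). Then for any two n-qubit pure states ψ = |ψ⟩⟨ψ| and φ = |φ⟩⟨φ|, |C(|ψ⟩) − C(|φ⟩)| ≤ (4 − 2^{3−n}) |ψ − φ|_tr, where |A − B|_tr = ½ Tr √((A−B)†(A−B)) is the trace distance. -/

import Mathlib

open Matrix BigOperators Complex
open scoped ComplexOrder

noncomputable section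

/-- Frobenius (Hilbert–Schmidt) norm `‖X‖₂ = √(Tr(XᴴX))`. -/
def frobNorm {m : Type*} [Fintype m] (X : Matrix m m ℂ) : ℝ :=
  Real.sqrt ((Xᴴ * X).trace.re)

/-- Trace norm (Schatten 1-norm) `‖X‖₁ = Tr √(XᴴX)`. -/
def traceNorm {m : Type*} [Fintype m] [DecidableEq m] (X : Matrix m m ℂ) : ℝ :=
  (((Matrix.posSemidef_conjTranspose_mul_self X).1.eigenvectorUnitary.1 *
      diagonal (((↑) : ℝ → ℂ) ∘ Real.sqrt ∘ (Matrix.posSemidef_conjTranspose_mul_self X).1.eigenvalues) *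
      (star (Matrix.posSemidef_conjTranspose_mul_self X).1.eigenvectorUnitary :
        Matrix m m ℂ)).trace).re

/-- Trace distance `|ρ − σ|_tr = ½‖ρ − σ‖₁`. -/
def traceDist {m : Type*} [Fintype m] [DecidableEq m] (ρ σ : Matrix m m ℂ) : ℝ :=
  traceNorm (ρ - σ) / 2

/-- Purity `Tr(ρ²)` (real part). -/
def purity {m : Type*} [Fintype m] (ρ : Matrix m m ℂ) : ℝ := ((ρ * ρ).trace).re

/-- Outer product `|ψ⟩⟨ψ|`. -/
def outer {m : Type*} (ψ : m → ℂ) : Matrix m m ℂ :=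
  Matrix.of fun a b => ψ a * star (ψ b)

/-- Partial trace over the second tensor factor. -/
def ptraceB {A B : Type*} [Fintype B] (M : Matrix (A × B) (A × B) ℂ) : Matrix A A ℂ :=
  Matrix.of fun a a' => ∑ b, M (a, b) (a', b)

/-- Partial trace over the first tensor factor. -/
def ptraceA {A B : Type*} [Fintype A] (M : Matrix (A × B) (A × B) ℂ) : Matrix B B ℂ :=
  Matrix.of fun b b' => ∑ a, M (a, b) (a, b')

/-- Index type of the `n`-qubit computational basis. -/
abbrev QIdx (n : ℕ) := Fin n → Fin 2

/-- Merge a bit assignment on `s` with one on its complement. -/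
def mergeOn {n : ℕ} (s : Finset (Fin n)) (f : {i // i ∈ s} → Fin 2)
    (g : {i // i ∉ s} → Fin 2) : QIdx n :=
  fun i => if h : i ∈ s then f ⟨i, h⟩ else g ⟨i, h⟩

/-- Reduced density matrix on the qubit subset `s` (partial trace over `sᶜ`). -/
def reduce {n : ℕ} (s : Finset (Fin n)) (ρ : Matrix (QIdx n) (QIdx n) ℂ) :
    Matrix ({i // i ∈ s} → Fin 2) ({i // i ∈ s} → Fin 2) ℂ :=
  Matrix.of fun f f' => ∑ g : {i // i ∉ s} → Fin 2, ρ (mergeOn s f g) (mergeOn s f' g)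

/-- Concentratable Entanglement `C(|ψ⟩) = 1 − 2⁻ⁿ Σ_{α⊆[n]} Tr(ρ_α²)`. -/
def CE {n : ℕ} (ψ : QIdx n → ℂ) : ℝ :=
  1 - (1 / 2 ^ n) * ∑ s : Finset (Fin n), purity (reduce s (outer ψ))

end
-- ================== helpers ==================
noncomputable section Helpers
namespace CEproof

variable {n : ℕ}

def mergeEquiv (s : Finset (Fin n)) :
    (({i // i ∈ s} → Fin 2) × ({i // i ∉ s} → Fin 2)) ≃ QIdx n where
  toFun p := mergeOn s p.1 p.2
  invFun h := (fun i => h i.1, fun i => h i.1)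
  left_inv := by
    rintro ⟨f, g⟩
    refine Prod.ext (funext fun i => ?_) (funext fun i => ?_)
    · simp [mergeOn, i.2]
    · simp [mergeOn, i.2]
  right_inv h := by
    funext i
    show mergeOn s _ _ i = h i
    unfold mergeOn
    split <;> rfl

lemma sum_merge {M : Type*} [AddCommMonoid M] (s : Finset (Fin n)) (X : QIdx n → M) :
    ∑ h, X h = ∑ f, ∑ g, X (mergeOn s f g) := by
  rw [← Equiv.sum_comp (mergeEquiv s) X, Fintype.sum_prod_type]
  rfl

def cdot {ι : Type*} [Fintype ι] (x y : ι → ℂ) : ℂ :=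
  ∑ i, (starRingEnd ℂ) (x i) * y i

lemma cdot_abs_le {ι : Type*} [Fintype ι] (x y : ι → ℂ) :
    ‖cdot x y‖ ≤ Real.sqrt (∑ i, Complex.normSq (x i)) * Real.sqrt (∑ i, Complex.normSq (y i)) := by
  have h := norm_inner_le_norm (𝕜 := ℂ) (E := EuclideanSpace ℂ ι)
    ((WithLp.equiv 2 (ι → ℂ)).symm x) ((WithLp.equiv 2 (ι → ℂ)).symm y)
  rw [EuclideanSpace.norm_eq, EuclideanSpace.norm_eq, PiLp.inner_apply] at h
  simpa [cdot, RCLike.inner_apply, Complex.normSq_eq_norm_sq, mul_comm] using h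

lemma normSq_cdot_le {ι : Type*} [Fintype ι] (x y : ι → ℂ) :
    Complex.normSq (cdot x y) ≤ (∑ i, Complex.normSq (x i)) * (∑ i, Complex.normSq (y i)) := by
  have h := cdot_abs_le x y
  have hx : (0:ℝ) ≤ ∑ i, Complex.normSq (x i) :=
    Finset.sum_nonneg fun i _ => Complex.normSq_nonneg _
  have hy : (0:ℝ) ≤ ∑ i, Complex.normSq (y i) :=
    Finset.sum_nonneg fun i _ => Complex.normSq_nonneg _
  have h2 : ‖cdot x y‖^2 ≤ (Real.sqrt (∑ i, Complex.normSq (x i)) * Real.sqrt (∑ i, Complex.normSq (y i)))^2 := by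
    apply pow_le_pow_left₀ (norm_nonneg _) h
  rw [mul_pow, Real.sq_sqrt hx, Real.sq_sqrt hy] at h2
  calc Complex.normSq (cdot x y) = ‖cdot x y‖^2 := by
        rw [Complex.sq_norm]
    _ ≤ _ := h2

lemma cdot_conj {ι : Type*} [Fintype ι] (x y : ι → ℂ) :
    cdot x y = (starRingEnd ℂ) (cdot y x) := by
  unfold cdot
  rw [map_sum]
  apply Finset.sum_congr rfl
  intro i _
  simp [mul_comm]

lemma cdot_self {ι : Type*} [Fintype ι] (x : ι → ℂ) :
    cdot x x = ((∑ i, Complex.normSq (x i) : ℝ) : ℂ) := by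
  unfold cdot
  push_cast
  apply Finset.sum_congr rfl
  intro i _
  rw [Complex.normSq_eq_conj_mul_self]

def slc (s : Finset (Fin n)) (u : QIdx n → ℂ) (f : {i // i ∈ s} → Fin 2) :
    ({i // i ∉ s} → Fin 2) → ℂ :=
  fun g => u (mergeOn s f g)

lemma reduce_outer_apply (s : Finset (Fin n)) (u : QIdx n → ℂ) (f f' : {i // i ∈ s} → Fin 2) :
    reduce s (outer u) f f' = cdot (slc s u f') (slc s u f) := by
  simp only [reduce, outer, cdot, slc, Matrix.of_apply]
  apply Finset.sum_congr rfl
  intro g _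
  simp [Complex.star_def, mul_comm]

lemma purity_reduce (s : Finset (Fin n)) (u : QIdx n → ℂ) :
    purity (reduce s (outer u)) =
      ∑ f, ∑ f', Complex.normSq (cdot (slc s u f') (slc s u f)) := by
  unfold purity
  rw [Matrix.trace]
  rw [Complex.re_sum]
  apply Finset.sum_congr rfl
  intro f _
  rw [Matrix.diag_apply, Matrix.mul_apply, Complex.re_sum]
  apply Finset.sum_congr rfl
  intro f' _
  rw [reduce_outer_apply, reduce_outer_apply]
  rw [cdot_conj (slc s u f) (slc s u f')]
  rw [Complex.mul_conj]
  simp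

lemma sum_slc_normSq (s : Finset (Fin n)) (u : QIdx n → ℂ) :
    ∑ f, ∑ g, Complex.normSq (slc s u f g) = ∑ h, Complex.normSq (u h) :=
  (sum_merge s fun h => Complex.normSq (u h)).symm

lemma purity_reduce_le_one (s : Finset (Fin n)) (u : QIdx n → ℂ)
    (hu : ∑ h, Complex.normSq (u h) = 1) :
    purity (reduce s (outer u)) ≤ 1 := by
  rw [purity_reduce]
  calc ∑ f, ∑ f', Complex.normSq (cdot (slc s u f') (slc s u f))
      ≤ ∑ f, ∑ f', (∑ g, Complex.normSq (slc s u f' g)) * (∑ g, Complex.normSq (slc s u f g)) := by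
        apply Finset.sum_le_sum; intro f _
        apply Finset.sum_le_sum; intro f' _
        exact normSq_cdot_le _ _
    _ = (∑ f, ∑ g, Complex.normSq (slc s u f g)) * (∑ f, ∑ g, Complex.normSq (slc s u f g)) := by
        simp_rw [← Finset.sum_mul]
        rw [← Finset.mul_sum]
    _ = 1 := by rw [sum_slc_normSq s u, hu, mul_one]


lemma normSq_add_le (z w : ℂ) :
    Complex.normSq (z + w) ≤ 2 * Complex.normSq z + 2 * Complex.normSq w := by
  simp only [Complex.normSq_apply, Complex.add_re, Complex.add_im]
  nlinarith [sq_nonneg (z.re - w.re), sq_nonneg (z.im - w.im)]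

lemma normSq_diff_re (z w : ℂ) :
    Complex.normSq z - Complex.normSq w = ((starRingEnd ℂ) (z - w) * (z + w)).re := by
  simp only [Complex.normSq_apply, Complex.mul_re, Complex.sub_re, Complex.sub_im,
    Complex.add_re, Complex.add_im, Complex.conj_re, Complex.conj_im]
  ring

lemma sum_normSq_sub (ψ φ : QIdx n → ℂ) (hψ : ∑ h, Complex.normSq (ψ h) = 1)
    (hφ : ∑ h, Complex.normSq (φ h) = 1) (a : ℝ) (ha : cdot ψ φ = (a : ℂ)) :
    ∑ h, Complex.normSq (ψ h - φ h) = 2 - 2 * a := by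
  have key : ∀ h, Complex.normSq (ψ h - φ h)
      = Complex.normSq (ψ h) + Complex.normSq (φ h)
        - 2 * ((starRingEnd ℂ) (ψ h) * φ h).re := by
    intro h
    simp only [Complex.normSq_apply, Complex.sub_re, Complex.sub_im, Complex.mul_re,
      Complex.conj_re, Complex.conj_im]
    ring
  have hre : ∑ h, ((starRingEnd ℂ) (ψ h) * φ h).re = a := by
    have : (cdot ψ φ).re = a := by rw [ha]; simp
    rw [← this]
    rw [cdot, Complex.re_sum]
  simp_rw [key]
  rw [Finset.sum_sub_distrib, Finset.sum_add_distrib, hψ, hφ, ← Finset.mul_sum, hre]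
  ring

lemma sum_normSq_add (ψ φ : QIdx n → ℂ) (hψ : ∑ h, Complex.normSq (ψ h) = 1)
    (hφ : ∑ h, Complex.normSq (φ h) = 1) (a : ℝ) (ha : cdot ψ φ = (a : ℂ)) :
    ∑ h, Complex.normSq (ψ h + φ h) = 2 + 2 * a := by
  have key : ∀ h, Complex.normSq (ψ h + φ h)
      = Complex.normSq (ψ h) + Complex.normSq (φ h)
        + 2 * ((starRingEnd ℂ) (ψ h) * φ h).re := by
    intro h
    simp only [Complex.normSq_apply, Complex.add_re, Complex.add_im, Complex.mul_re,
      Complex.conj_re, Complex.conj_im]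
    ring
  have hre : ∑ h, ((starRingEnd ℂ) (ψ h) * φ h).re = a := by
    have : (cdot ψ φ).re = a := by rw [ha]; simp
    rw [← this]
    rw [cdot, Complex.re_sum]
  simp_rw [key]
  rw [Finset.sum_add_distrib, Finset.sum_add_distrib, hψ, hφ, ← Finset.mul_sum, hre]
  ring

/-- Per-subset purity difference bound. -/
lemma purity_diff_le (s : Finset (Fin n)) (ψ φ : QIdx n → ℂ)
    (hψ : ∑ h, Complex.normSq (ψ h) = 1) (hφ : ∑ h, Complex.normSq (φ h) = 1)
    (a : ℝ) (ha : cdot ψ φ = (a : ℂ)) (ha2 : a ^ 2 ≤ 1) :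
    |purity (reduce s (outer ψ)) - purity (reduce s (outer φ))| ≤ 4 * Real.sqrt (1 - a ^ 2) := by
  classical
  set F := ({i // i ∈ s} → Fin 2)
  set x : QIdx n → ℂ := fun h => ψ h - φ h with hx
  set y : QIdx n → ℂ := fun h => ψ h + φ h with hy
  set R : F × F → ℂ := fun p => cdot (slc s ψ p.2) (slc s ψ p.1) with hR
  set Q : F × F → ℂ := fun p => cdot (slc s φ p.2) (slc s φ p.1) with hQ
  -- purity as sum over product
  have hpψ : purity (reduce s (outer ψ)) = ∑ p : F × F, Complex.normSq (R p) := by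
    rw [purity_reduce, Fintype.sum_prod_type]
  have hpφ : purity (reduce s (outer φ)) = ∑ p : F × F, Complex.normSq (Q p) := by
    rw [purity_reduce, Fintype.sum_prod_type]
  -- difference as Re of a cdot over F × F
  have hD : purity (reduce s (outer ψ)) - purity (reduce s (outer φ))
      = (cdot (fun p => R p - Q p) (fun p => R p + Q p)).re := by
    rw [hpψ, hpφ, ← Finset.sum_sub_distrib, cdot, Complex.re_sum]
    apply Finset.sum_congr rfl
    intro p _
    exact normSq_diff_re (R p) (Q p)
  rw [hD]
  -- Cauchy-Schwarz
  have hCS : |(cdot (fun p => R p - Q p) (fun p => R p + Q p)).re|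
      ≤ Real.sqrt (∑ p : F × F, Complex.normSq (R p - Q p))
        * Real.sqrt (∑ p : F × F, Complex.normSq (R p + Q p)) := by
    calc |(cdot (fun p => R p - Q p) (fun p => R p + Q p)).re|
        ≤ ‖cdot (fun p => R p - Q p) (fun p => R p + Q p)‖ := Complex.abs_re_le_norm _
      _ ≤ _ := by
          have := cdot_abs_le (fun p : F × F => R p - Q p) (fun p : F × F => R p + Q p)
          exact this
  -- second factor ≤ 2
  have hadd : ∑ p : F × F, Complex.normSq (R p + Q p) ≤ 4 := by
    calc ∑ p : F × F, Complex.normSq (R p + Q p)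
        ≤ ∑ p : F × F, (2 * Complex.normSq (R p) + 2 * Complex.normSq (Q p)) := by
          apply Finset.sum_le_sum; intro p _; exact normSq_add_le _ _
      _ = 2 * (∑ p : F × F, Complex.normSq (R p)) + 2 * (∑ p : F × F, Complex.normSq (Q p)) := by
          rw [Finset.sum_add_distrib, ← Finset.mul_sum, ← Finset.mul_sum]
      _ ≤ 2 * 1 + 2 * 1 := by
          have h1 : ∑ p : F × F, Complex.normSq (R p) ≤ 1 := by
            rw [← hpψ]; exact purity_reduce_le_one s ψ hψ
          have h2 : ∑ p : F × F, Complex.normSq (Q p) ≤ 1 := by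
            rw [← hpφ]; exact purity_reduce_le_one s φ hφ
          linarith
      _ = 4 := by norm_num
  -- first factor ≤ 4(1-a²)
  have hkey : ∀ p : F × F, R p - Q p
      = (1/2 : ℂ) * (cdot (slc s y p.2) (slc s x p.1) + cdot (slc s x p.2) (slc s y p.1)) := by
    rintro ⟨f, f'⟩
    simp only [hR, hQ, cdot, slc, hx, hy]
    rw [← Finset.sum_sub_distrib, ← Finset.sum_add_distrib, Finset.mul_sum]
    apply Finset.sum_congr rfl
    intro g _
    simp only [map_add, map_sub]
    ring
  have hsub : ∑ p : F × F, Complex.normSq (R p - Q p) ≤ 4 * (1 - a ^ 2) := by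
    have hb : ∀ p : F × F, Complex.normSq (R p - Q p)
        ≤ (1/2 : ℝ) * ((∑ g, Complex.normSq (slc s y p.2 g)) * (∑ g, Complex.normSq (slc s x p.1 g))
            + (∑ g, Complex.normSq (slc s x p.2 g)) * (∑ g, Complex.normSq (slc s y p.1 g))) := by
      intro p
      rw [hkey p]
      have h1 := normSq_cdot_le (slc s y p.2) (slc s x p.1)
      have h2 := normSq_cdot_le (slc s x p.2) (slc s y p.1)
      have h3 := normSq_add_le (cdot (slc s y p.2) (slc s x p.1)) (cdot (slc s x p.2) (slc s y p.1))
      rw [Complex.normSq_mul]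
      have : Complex.normSq (1/2 : ℂ) = 1/4 := by norm_num [Complex.normSq_apply]
      rw [this]
      linarith
    calc ∑ p : F × F, Complex.normSq (R p - Q p)
        ≤ ∑ p : F × F, (1/2 : ℝ) * ((∑ g, Complex.normSq (slc s y p.2 g)) * (∑ g, Complex.normSq (slc s x p.1 g))
            + (∑ g, Complex.normSq (slc s x p.2 g)) * (∑ g, Complex.normSq (slc s y p.1 g))) :=
          Finset.sum_le_sum fun p _ => hb p
      _ = (∑ h, Complex.normSq (x h)) * (∑ h, Complex.normSq (y h)) := by
          rw [Fintype.sum_prod_type]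
          simp_rw [mul_add, Finset.sum_add_distrib]
          rw [sum_merge s fun h => Complex.normSq (x h), sum_merge s fun h => Complex.normSq (y h)]
          simp only [← Finset.sum_mul, ← Finset.mul_sum]
          simp only [slc]
          ring
      _ ≤ 4 * (1 - a ^ 2) := by
          rw [sum_normSq_sub ψ φ hψ hφ a ha, sum_normSq_add ψ φ hψ hφ a ha]
          nlinarith
  calc |(cdot (fun p => R p - Q p) (fun p => R p + Q p)).re|
      ≤ Real.sqrt (∑ p : F × F, Complex.normSq (R p - Q p))
        * Real.sqrt (∑ p : F × F, Complex.normSq (R p + Q p)) := hCS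
    _ ≤ Real.sqrt (4 * (1 - a ^ 2)) * Real.sqrt 4 := by
        apply mul_le_mul (Real.sqrt_le_sqrt hsub) (Real.sqrt_le_sqrt hadd)
          (Real.sqrt_nonneg _) (Real.sqrt_nonneg _)
    _ = 4 * Real.sqrt (1 - a ^ 2) := by
        rw [Real.sqrt_mul (by norm_num : (0:ℝ) ≤ 4)]
        rw [show (4:ℝ).sqrt = 2 by
          rw [show (4:ℝ) = 2^2 by norm_num, Real.sqrt_sq (by norm_num : (0:ℝ) ≤ 2)]]
        ring

-- ============ boundary terms ============

lemma purity_reduce_empty (u : QIdx n → ℂ) (hu : ∑ h, Complex.normSq (u h) = 1) :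
    purity (reduce (∅ : Finset (Fin n)) (outer u)) = 1 := by
  haveI : IsEmpty {i : Fin n // i ∈ (∅ : Finset (Fin n))} :=
    ⟨fun i => (Finset.notMem_empty _ i.2)⟩
  have hc : ∀ f f' : ({i // i ∈ (∅ : Finset (Fin n))} → Fin 2),
      cdot (slc (∅ : Finset (Fin n)) u f') (slc (∅ : Finset (Fin n)) u f) = 1 := by
    intro f f'
    rw [Subsingleton.elim f' f, cdot_self]
    norm_cast
    have h3 := sum_slc_normSq (∅ : Finset (Fin n)) u
    rw [hu] at h3
    rw [← h3, Fintype.sum_unique fun f0 => ∑ g, Complex.normSq (slc (∅ : Finset (Fin n)) u f0 g),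
      Subsingleton.elim f default]
    congr!
  rw [purity_reduce]
  simp only [hc]
  simp

lemma purity_reduce_univ (u : QIdx n → ℂ) (hu : ∑ h, Complex.normSq (u h) = 1) :
    purity (reduce (Finset.univ : Finset (Fin n)) (outer u)) = 1 := by
  haveI : IsEmpty {i : Fin n // i ∉ (Finset.univ : Finset (Fin n))} :=
    ⟨fun i => i.2 (Finset.mem_univ _)⟩
  rw [purity_reduce]
  have hsingle : ∀ f f' : {i : Fin n // i ∈ (Finset.univ : Finset (Fin n))} → Fin 2,
      cdot (slc Finset.univ u f') (slc Finset.univ u f)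
        = (starRingEnd ℂ) (slc Finset.univ u f' default) * slc Finset.univ u f default := by
    intro f f'
    rw [cdot, Fintype.sum_unique fun g => (starRingEnd ℂ) (slc Finset.univ u f' g) * slc Finset.univ u f g]
    congr!
  have hsum : ∑ f : {i : Fin n // i ∈ (Finset.univ : Finset (Fin n))} → Fin 2,
      Complex.normSq (slc Finset.univ u f default) = 1 := by
    rw [← hu, sum_merge (Finset.univ : Finset (Fin n)) fun h => Complex.normSq (u h)]
    apply Finset.sum_congr rfl
    intro f _
    rw [Fintype.sum_unique fun g => Complex.normSq (u (mergeOn Finset.univ f g))]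
    simp only [slc]
    congr!
  calc ∑ f, ∑ f', Complex.normSq (cdot (slc Finset.univ u f') (slc Finset.univ u f))
      = ∑ f, ∑ f', Complex.normSq (slc Finset.univ u f' default)
          * Complex.normSq (slc Finset.univ u f default) := by
        apply Finset.sum_congr rfl; intro f _
        apply Finset.sum_congr rfl; intro f' _
        rw [hsingle, Complex.normSq_mul, Complex.normSq_conj]
    _ = 1 := by
        simp_rw [← Finset.sum_mul]
        rw [hsum]
        simp_rw [one_mul]
        exact hsum

-- ============ ketbra algebra and trace norm ============

def ketbra {m : Type*} (u v : m → ℂ) : Matrix m m ℂ :=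
  Matrix.of fun a b => u a * star (v b)

lemma outer_eq_ketbra {m : Type*} (u : m → ℂ) : outer u = ketbra u u := rfl

lemma ketbra_mul {m : Type*} [Fintype m] (u v w x : m → ℂ) :
    ketbra u v * ketbra w x = cdot v w • ketbra u x := by
  ext a b
  simp only [ketbra, Matrix.mul_apply, Matrix.smul_apply, smul_eq_mul, Matrix.of_apply, cdot,
    Finset.sum_mul, Complex.star_def]
  apply Finset.sum_congr rfl
  intro c _
  ring

lemma trace_ketbra {m : Type*} [Fintype m] (u v : m → ℂ) :
    (ketbra u v).trace = cdot v u := by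
  unfold Matrix.trace cdot ketbra
  apply Finset.sum_congr rfl
  intro i _
  simp [Complex.star_def, mul_comm]

lemma conjTranspose_ketbra {m : Type*} (u v : m → ℂ) :
    (ketbra u v)ᴴ = ketbra v u := by
  ext a b
  simp [ketbra, Matrix.conjTranspose_apply, mul_comm]

lemma posSemidef_smul_real {m : Type*} [Fintype m] {A : Matrix m m ℂ} (hA : A.PosSemidef)
    {c : ℝ} (hc : 0 ≤ c) : ((c : ℂ) • A).PosSemidef := by
  exact hA.smul (Complex.zero_le_real.mpr hc)

lemma sqrt_form_eq {m : Type*} [Fintype m] [DecidableEq m] (A : Matrix m m ℂ)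
    (hA : A.IsHermitian) (t : ℝ) (ht : 0 < t) (hAA : A * A = ((t ^ 2 : ℝ) : ℂ) • A) :
    hA.eigenvectorUnitary.1 * diagonal (((↑) : ℝ → ℂ) ∘ Real.sqrt ∘ hA.eigenvalues) *
      (star hA.eigenvectorUnitary : Matrix m m ℂ) = ((t : ℂ)⁻¹) • A := by
  set U := hA.eigenvectorUnitary with hUdef
  set D : Matrix m m ℂ := diagonal (RCLike.ofReal ∘ hA.eigenvalues) with hDdef
  have hs : A = U.1 * D * (star U : Matrix m m ℂ) := by
    have := hA.spectral_theorem
    rw [Unitary.conjStarAlgAut_apply] at this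
    exact this
  have hU1 : (star U : Matrix m m ℂ) * U.1 = 1 := by
    exact Unitary.star_mul_self_of_mem U.2
  have hU2 : U.1 * (star U : Matrix m m ℂ) = 1 := by
    exact Unitary.mul_star_self_of_mem U.2
  have hDA : D = (star U : Matrix m m ℂ) * A * U.1 := by
    rw [hs, ← Matrix.mul_assoc, ← Matrix.mul_assoc, hU1, Matrix.one_mul, Matrix.mul_assoc, hU1,
      Matrix.mul_one]
  have hDD : D * D = ((t ^ 2 : ℝ) : ℂ) • D := by
    have : D * D = (star U : Matrix m m ℂ) * (A * A) * U.1 := by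
      rw [hDA]
      simp only [Matrix.mul_assoc]
      rw [← Matrix.mul_assoc U.1 (star U : Matrix m m ℂ), hU2, Matrix.one_mul]
    rw [this, hAA, hDA, Matrix.mul_smul, Matrix.smul_mul]
  have hev : ∀ i, hA.eigenvalues i * hA.eigenvalues i = t ^ 2 * hA.eigenvalues i := by
    intro i
    have := congrFun (congrFun hDD i) i
    rw [hDdef, Matrix.diagonal_mul_diagonal, Matrix.smul_apply, Matrix.diagonal_apply_eq,
      Matrix.diagonal_apply_eq] at this
    simp only [Function.comp_apply, smul_eq_mul] at this
    apply Complex.ofReal_injective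
    rw [Complex.ofReal_mul (t ^ 2), Complex.ofReal_mul]
    exact this
  have hdiag : diagonal (((↑) : ℝ → ℂ) ∘ Real.sqrt ∘ hA.eigenvalues) = ((t : ℂ)⁻¹) • D := by
    rw [hDdef, ← Matrix.diagonal_smul]
    congr 1
    funext i
    simp only [Function.comp_apply, Pi.smul_apply, smul_eq_mul]
    have h := hev i
    have htne : (t : ℂ) ≠ 0 := by exact_mod_cast ne_of_gt ht
    rcases mul_eq_zero.mp (show hA.eigenvalues i * (hA.eigenvalues i - t ^ 2) = 0 by linear_combination h) with h0 | h1
    · rw [h0]; simp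
    · have he : hA.eigenvalues i = t ^ 2 := by linarith
      rw [he, Real.sqrt_sq ht.le]
      change (t : ℂ) = (t : ℂ)⁻¹ * ((t ^ 2 : ℝ) : ℂ)
      push_cast
      field_simp
  rw [hdiag, Matrix.mul_smul, Matrix.smul_mul, ← hs]

lemma traceNorm_outer_sub (ψ φ : QIdx n → ℂ)
    (hψ : ∑ h, Complex.normSq (ψ h) = 1) (hφ : ∑ h, Complex.normSq (φ h) = 1)
    (a : ℝ) (ha : cdot ψ φ = (a : ℂ)) (hlt : a ^ 2 < 1) :
    traceNorm (outer ψ - outer φ) = 2 * Real.sqrt (1 - a ^ 2) := by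
  classical
  set t := Real.sqrt (1 - a ^ 2) with htdef
  have ht0 : 0 < t := Real.sqrt_pos.mpr (by linarith)
  have ht2 : t ^ 2 = 1 - a ^ 2 := Real.sq_sqrt (by linarith)
  set Δ := outer ψ - outer φ with hΔdef
  have hψψ : cdot ψ ψ = 1 := by rw [cdot_self, hψ]; norm_num
  have hφφ : cdot φ φ = 1 := by rw [cdot_self, hφ]; norm_num
  have hφψ : cdot φ ψ = (a : ℂ) := by
    rw [cdot_conj, ha]
    simp
  have hΔH : Δᴴ = Δ := by
    rw [hΔdef, Matrix.conjTranspose_sub, outer_eq_ketbra, outer_eq_ketbra,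
      conjTranspose_ketbra, conjTranspose_ketbra]
  have hM : Δ * Δ = outer ψ + outer φ - (a : ℂ) • ketbra ψ φ - (a : ℂ) • ketbra φ ψ := by
    rw [hΔdef, outer_eq_ketbra, outer_eq_ketbra, sub_mul, mul_sub, mul_sub,
      ketbra_mul, ketbra_mul, ketbra_mul, ketbra_mul, hψψ, hφφ, ha, hφψ]
    simp only [one_smul]
    abel
  have hMM : (Δ * Δ) * (Δ * Δ) = (((1 - a ^ 2 : ℝ)) : ℂ) • (Δ * Δ) := by
    rw [hM]
    simp only [sub_mul, mul_sub, add_mul, mul_add, outer_eq_ketbra, Matrix.smul_mul,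
      Matrix.mul_smul, ketbra_mul, hψψ, hφφ, ha, hφψ, smul_smul, one_smul]
    push_cast
    module
  set B := ((t : ℂ)⁻¹) • (Δ * Δ) with hBdef
  have hΔΔpsd : (Δ * Δ).PosSemidef := by
    have h := Matrix.posSemidef_conjTranspose_mul_self Δ
    rwa [hΔH] at h
  have hBpsd : B.PosSemidef := by
    rw [hBdef, show ((t : ℂ)⁻¹) = ((t⁻¹ : ℝ) : ℂ) by push_cast; ring]
    exact posSemidef_smul_real hΔΔpsd (by positivity)
  have hB2 : B ^ 2 = Δᴴ * Δ := by
    rw [hΔH, pow_two, hBdef, Matrix.smul_mul, Matrix.mul_smul, smul_smul, hMM, smul_smul]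
    have : (t : ℂ)⁻¹ * (t : ℂ)⁻¹ * ((1 - a ^ 2 : ℝ) : ℂ) = 1 := by
      have : ((1 - a ^ 2 : ℝ) : ℂ) = (t : ℂ) * (t : ℂ) := by
        rw [← ht2]; push_cast; ring
      rw [this]
      field_simp
    rw [this, one_smul]
  have hsqrt : B = (Matrix.posSemidef_conjTranspose_mul_self Δ).1.eigenvectorUnitary.1 *
      diagonal (((↑) : ℝ → ℂ) ∘ Real.sqrt ∘ (Matrix.posSemidef_conjTranspose_mul_self Δ).1.eigenvalues) *
      (star (Matrix.posSemidef_conjTranspose_mul_self Δ).1.eigenvectorUnitary : Matrix _ _ ℂ) := by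
    rw [sqrt_form_eq _ _ t ht0 (by rw [hΔH, hMM, ← ht2]), hΔH]
  unfold traceNorm
  rw [← hsqrt, hBdef, Matrix.trace_smul, hM]
  rw [Matrix.trace_sub, Matrix.trace_sub, Matrix.trace_add, Matrix.trace_smul, Matrix.trace_smul,
    outer_eq_ketbra, outer_eq_ketbra, trace_ketbra, trace_ketbra, trace_ketbra, trace_ketbra,
    hψψ, hφφ, ha, hφψ]
  have : ((t : ℂ)⁻¹ • (1 + 1 - (a : ℂ) • (a : ℂ) - (a : ℂ) • (a : ℂ))) = ((2 * t : ℝ) : ℂ) := by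
    have h1 : (1 + 1 - (a : ℂ) • (a : ℂ) - (a : ℂ) • (a : ℂ)) = ((2 * t ^ 2 : ℝ) : ℂ) := by
      rw [ht2]; push_cast; simp [smul_eq_mul]; ring
    rw [h1]
    rw [smul_eq_mul]
    rw [show ((2 * t ^ 2 : ℝ) : ℂ) = 2 * (t : ℂ) ^ 2 by push_cast; ring]
    rw [show ((2 * t : ℝ) : ℂ) = 2 * (t : ℂ) by push_cast; ring]
    have htne : (t : ℂ) ≠ 0 := by exact_mod_cast ne_of_gt ht0
    field_simp
  rw [this]
  simp

lemma traceNorm_zero_mat {m : Type*} [Fintype m] [DecidableEq m] :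
    traceNorm (0 : Matrix m m ℂ) = 0 := by
  unfold traceNorm
  rw [sqrt_form_eq _ _ 1 one_pos (by simp)]
  simp

/-- Main lemma, assuming the overlap is real. -/
lemma main (hn : 1 ≤ n) (ψ φ : QIdx n → ℂ)
    (hψ : ∑ f, Complex.normSq (ψ f) = 1) (hφ : ∑ f, Complex.normSq (φ f) = 1)
    (a : ℝ) (ha : cdot ψ φ = (a : ℂ)) :
    |CE ψ - CE φ| ≤ (4 - (2 : ℝ) ^ ((3 : ℤ) - n)) * traceDist (outer ψ) (outer φ) := by
  classical
  have ha2 : a ^ 2 ≤ 1 := by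
    have h := cdot_abs_le ψ φ
    rw [ha, hψ, hφ, Real.sqrt_one, mul_one] at h
    have : |a| ≤ 1 := by rwa [Complex.norm_real, Real.norm_eq_abs] at h
    nlinarith [abs_nonneg a, _root_.sq_abs a]
  have hcoef : (0:ℝ) ≤ 4 - (2 : ℝ) ^ ((3 : ℤ) - n) := by
    have h1 : ((3 : ℤ) - n) ≤ 2 := by omega
    have := zpow_le_zpow_right₀ (by norm_num : (1:ℝ) ≤ 2) h1
    have h4 : (2:ℝ) ^ (2:ℤ) = 4 := by norm_num
    linarith [h4 ▸ this]
  by_cases hlt : a ^ 2 < 1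
  · -- nondegenerate case
    set t := Real.sqrt (1 - a ^ 2) with htdef
    have ht0 : 0 ≤ t := Real.sqrt_nonneg _
    have hTD : traceDist (outer ψ) (outer φ) = t := by
      unfold traceDist
      rw [traceNorm_outer_sub ψ φ hψ hφ a ha hlt]
      ring
    haveI : Nonempty (Fin n) := ⟨⟨0, hn⟩⟩
    have hune : (Finset.univ : Finset (Fin n)) ≠ ∅ := Finset.univ_nonempty.ne_empty
    have hne : (∅ : Finset (Fin n)) ≠ Finset.univ := Ne.symm hune
    set d : Finset (Fin n) → ℝ :=
      fun s => purity (reduce s (outer φ)) - purity (reduce s (outer ψ)) with hd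
    have hdiff : CE ψ - CE φ = (1 / 2 ^ n) * ∑ s : Finset (Fin n), d s := by
      unfold CE
      rw [hd, Finset.sum_sub_distrib]
      ring
    have hbound : ∀ s, |d s| ≤ 4 * t := by
      intro s
      rw [hd, abs_sub_comm]
      exact purity_diff_le s ψ φ hψ hφ a ha ha2
    have hd0 : d ∅ = 0 := by
      rw [hd]
      simp only
      rw [purity_reduce_empty φ hφ, purity_reduce_empty ψ hψ, sub_self]
    have hd1 : d Finset.univ = 0 := by
      rw [hd]
      simp only
      rw [purity_reduce_univ φ hφ, purity_reduce_univ ψ hψ, sub_self]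
    set T : Finset (Finset (Fin n)) := {∅, Finset.univ} with hT
    have hTsub : T ⊆ Finset.univ := Finset.subset_univ T
    have hsplit : ∑ s : Finset (Fin n), d s = ∑ s ∈ Finset.univ \ T, d s := by
      rw [← Finset.sum_sdiff hTsub, hT, Finset.sum_pair hne, hd0, hd1]
      ring
    have hcard : (Finset.univ \ T).card = 2 ^ n - 2 := by
      rw [Finset.card_sdiff_of_subset hTsub, Finset.card_univ, Fintype.card_finset, Fintype.card_fin,
        hT, Finset.card_pair hne]
    have hcast : ((2 ^ n - 2 : ℕ) : ℝ) = 2 ^ n - 2 := by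
      have h2 : 2 ≤ 2 ^ n := by
        calc 2 = 2 ^ 1 := by norm_num
        _ ≤ 2 ^ n := Nat.pow_le_pow_right (by norm_num) hn
      push_cast [Nat.cast_sub h2]
      ring
    have habs : |∑ s : Finset (Fin n), d s| ≤ ((2:ℝ) ^ n - 2) * (4 * t) := by
      rw [hsplit]
      calc |∑ s ∈ Finset.univ \ T, d s| ≤ ∑ s ∈ Finset.univ \ T, |d s| :=
            Finset.abs_sum_le_sum_abs _ _
        _ ≤ (Finset.univ \ T).card • (4 * t) :=
            Finset.sum_le_card_nsmul _ _ _ (fun s _ => hbound s)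
        _ = ((2 ^ n - 2 : ℕ) : ℝ) * (4 * t) := by rw [hcard, nsmul_eq_mul]
        _ = ((2:ℝ) ^ n - 2) * (4 * t) := by rw [hcast]
    have h2n : (0:ℝ) < 2 ^ n := by positivity
    have hz : (2:ℝ) ^ ((3 : ℤ) - n) = 8 / 2 ^ n := by
      rw [sub_eq_add_neg, zpow_add₀ (two_ne_zero), _root_.zpow_neg, zpow_natCast]
      norm_num
      ring
    calc |CE ψ - CE φ| = (1 / 2 ^ n) * |∑ s : Finset (Fin n), d s| := by
          rw [hdiff, abs_mul, _root_.abs_of_nonneg (by positivity : (0:ℝ) ≤ (1:ℝ) / 2 ^ n)]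
      _ ≤ (1 / 2 ^ n) * (((2:ℝ) ^ n - 2) * (4 * t)) := by
          apply mul_le_mul_of_nonneg_left habs (by positivity)
      _ = (4 - (2 : ℝ) ^ ((3 : ℤ) - n)) * t := by
          rw [hz]
          field_simp
          ring
      _ = (4 - (2 : ℝ) ^ ((3 : ℤ) - n)) * traceDist (outer ψ) (outer φ) := by rw [hTD]
  · -- degenerate case : a² = 1, states equal up to phase
    have haa : a ^ 2 = 1 := le_antisymm ha2 (not_lt.mp hlt)
    have hre : ∑ h, ((starRingEnd ℂ) (ψ h) * φ h).re = a := by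
      have : (cdot ψ φ).re = a := by rw [ha]; simp
      rw [← this, cdot, Complex.re_sum]
    have hzero : ∑ h, Complex.normSq (ψ h - (a : ℂ) * φ h) = 0 := by
      have key : ∀ h, Complex.normSq (ψ h - (a : ℂ) * φ h)
          = Complex.normSq (ψ h) + a ^ 2 * Complex.normSq (φ h)
            - 2 * a * ((starRingEnd ℂ) (ψ h) * φ h).re := by
        intro h
        simp only [Complex.normSq_apply, Complex.sub_re, Complex.sub_im, Complex.mul_re,
          Complex.mul_im, Complex.conj_re, Complex.conj_im, Complex.ofReal_re, Complex.ofReal_im]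
        ring
      simp_rw [key]
      rw [Finset.sum_sub_distrib, Finset.sum_add_distrib, hψ, ← Finset.mul_sum, hφ,
        ← Finset.mul_sum, hre]
      nlinarith [haa]
    have heq : ∀ h, ψ h = (a : ℂ) * φ h := by
      intro h
      have h1 : Complex.normSq (ψ h - (a : ℂ) * φ h) = 0 := by
        have := Finset.sum_eq_zero_iff_of_nonneg
          (fun i _ => Complex.normSq_nonneg (ψ i - (a : ℂ) * φ i)) |>.mp hzero h (Finset.mem_univ h)
        exact this
      have := Complex.normSq_eq_zero.mp h1
      linear_combination this + (a : ℂ) * φ h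
    have houter : outer ψ = outer φ := by
      ext x y
      simp only [outer, Matrix.of_apply, heq, Complex.star_def, _root_.map_mul, Complex.conj_ofReal]
      have h2 : ((a:ℂ)) * (a:ℂ) = 1 := by
        have : (((a^2 : ℝ)) : ℂ) = 1 := by rw [haa]; norm_num
        push_cast at this
        linear_combination this
      linear_combination (φ x * (starRingEnd ℂ) (φ y)) * h2
    have hCE : CE ψ = CE φ := by unfold CE; rw [houter]
    have hΔ : outer ψ - outer φ = 0 := sub_eq_zero.mpr houter
    rw [hCE, sub_self, abs_zero]
    unfold traceDist
    rw [hΔ, traceNorm_zero_mat]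
    norm_num

end CEproof
end Helpers

/-- Continuity of Concentratable Entanglement:
`|C(ψ) − C(φ)| ≤ (4 − 2^{3−n}) |ψ − φ|_tr`. -/
theorem stmt_6 {n : ℕ} (hn : 1 ≤ n) (ψ φ : QIdx n → ℂ)
    (hψ : ∑ f, Complex.normSq (ψ f) = 1) (hφ : ∑ f, Complex.normSq (φ f) = 1) :
    |CE ψ - CE φ| ≤ (4 - (2 : ℝ) ^ ((3 : ℤ) - n)) * traceDist (outer ψ) (outer φ) := by
  classical
  set a₀ := CEproof.cdot ψ φ with ha₀
  by_cases h0 : a₀ = 0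
  · exact CEproof.main hn ψ φ hψ hφ 0 (by rw [← ha₀, h0]; norm_num)
  · have hnorm : ‖a₀‖ ≠ 0 := norm_ne_zero_iff.mpr h0
    set c : ℂ := (starRingEnd ℂ) a₀ / (‖a₀‖ : ℂ) with hc
    set φ' : QIdx n → ℂ := fun h => c * φ h with hφ'def
    have hnsqc : Complex.normSq c = 1 := by
      rw [hc, Complex.normSq_div, Complex.normSq_conj]
      rw [Complex.normSq_eq_norm_sq a₀]
      rw [show Complex.normSq ((‖a₀‖ : ℝ) : ℂ) = ‖a₀‖ * ‖a₀‖ from Complex.normSq_ofReal _]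
      rw [sq, div_self (mul_ne_zero hnorm hnorm)]
    have hφ'norm : ∑ f, Complex.normSq (φ' f) = 1 := by
      simp only [hφ'def, Complex.normSq_mul, hnsqc, one_mul]
      exact hφ
    have houter : outer φ' = outer φ := by
      ext x y
      simp only [outer, hφ'def, Matrix.of_apply, Complex.star_def, _root_.map_mul]
      have h1 : c * (starRingEnd ℂ) c = 1 := by
        rw [mul_comm, ← Complex.normSq_eq_conj_mul_self, hnsqc]
        norm_num
      linear_combination (φ x * (starRingEnd ℂ) (φ y)) * h1
    have ha' : CEproof.cdot ψ φ' = ((‖a₀‖ : ℝ) : ℂ) := by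
      unfold CEproof.cdot
      have hstep : ∀ i, (starRingEnd ℂ) (ψ i) * φ' i = c * ((starRingEnd ℂ) (ψ i) * φ i) := by
        intro i
        simp only [hφ'def]
        ring
      simp only [hstep]
      rw [← Finset.mul_sum]
      have hsum : ∑ i, (starRingEnd ℂ) (ψ i) * φ i = a₀ := by rw [ha₀]; rfl
      rw [hsum, hc, div_mul_eq_mul_div]
      have h2 : (starRingEnd ℂ) a₀ * a₀ = ((‖a₀‖ ^ 2 : ℝ) : ℂ) := by
        rw [← Complex.normSq_eq_conj_mul_self]
        norm_cast
        rw [Complex.normSq_eq_norm_sq]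
      rw [h2]
      have hne' : ((‖a₀‖ : ℝ) : ℂ) ≠ 0 := by
        exact_mod_cast hnorm
      push_cast
      rw [sq, mul_div_assoc, div_self hne', mul_one]
    have hmain := CEproof.main hn ψ φ' hψ hφ'norm ‖a₀‖ ha'
    have hCE : CE φ' = CE φ := by unfold CE; rw [houter]
    rwa [hCE, houter] at hmain
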